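/- Let n ≥ 1 and let Δ = {x ∈ ℝ^n : x_i ≥ 0 for all i, ∑_i x_i ≤ 1} be the standard simplex. For each subset S ⊆ {1,…,n}, let F_S be the convex hull of {0} ∪ {e_i : i ∈ S}, where e_1,…,e_n is the standard basis. Then for all positive reals μ, ν: μΔ + ν·(−Δ) = ⋃_{S ⊆ {1,…,n}} (μ F_S + ν·(−F_{S^c})), where S^c denotes the complement of S. -/

import Mathlib

open Pointwise MeasureTheory

lemma face_hull_eq (n : ℕ) (S : Finset (Fin n)) :
    convexHull ℝ
        ({0} ∪ {x : EuclideanSpace ℝ (Fin n) | ∃ i ∈ S, x = EuclideanSpace.single i (1 : ℝ)}) =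
      {x : EuclideanSpace ℝ (Fin n) |
        (∀ i, 0 ≤ x i) ∧ (∀ i, i ∉ S → x i = 0) ∧ ∑ i, x i ≤ 1} := by
  apply le_antisymm
  · apply convexHull_min
    · rintro x (rfl | ⟨i, hi, rfl⟩)
      · exact ⟨fun i => le_refl 0, fun i _ => rfl, by simp⟩
      · refine ⟨fun j => ?_, fun j hj => ?_, ?_⟩
        · rw [EuclideanSpace.single_apply]; split_ifs <;> norm_num
        · rw [EuclideanSpace.single_apply, if_neg]; rintro rfl; exact hj hi
        · simp [EuclideanSpace.single_apply]
    · intro x hx y hy a b ha hb hab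
      refine ⟨fun i => ?_, fun i hi => ?_, ?_⟩
      · have : (a • x + b • y) i = a * x i + b * y i := rfl
        rw [this]
        exact add_nonneg (mul_nonneg ha (hx.1 i)) (mul_nonneg hb (hy.1 i))
      · have : (a • x + b • y) i = a * x i + b * y i := rfl
        rw [this, hx.2.1 i hi, hy.2.1 i hi]; ring
      · have : ∀ i, (a • x + b • y) i = a * x i + b * y i := fun _ => rfl
        simp_rw [this, Finset.sum_add_distrib, ← Finset.mul_sum]
        calc a * ∑ i, x i + b * ∑ i, y i ≤ a * 1 + b * 1 := by
              gcongr
              · exact hx.2.2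
              · exact hy.2.2
          _ = 1 := by rw [mul_one, mul_one, hab]
  · rintro x ⟨h0, hS, hsum⟩
    set c : ℝ := ∑ i ∈ S, x i with hc
    have hc0 : 0 ≤ c := Finset.sum_nonneg fun i _ => h0 i
    have hc1 : c ≤ 1 := by
      refine le_trans ?_ hsum
      exact Finset.sum_le_sum_of_subset_of_nonneg (Finset.subset_univ S) fun i _ _ => h0 i
    have hxsum : x = ∑ i ∈ S, x i • EuclideanSpace.single i (1 : ℝ) := by
      ext j
      have hap : (∑ i ∈ S, x i • EuclideanSpace.single i (1 : ℝ)) j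
          = ∑ i ∈ S, (x i • EuclideanSpace.single i (1 : ℝ)) j :=
        by rw [WithLp.ofLp_sum]; exact Finset.sum_apply j S _
      rw [hap]
      simp only [PiLp.smul_apply, smul_eq_mul, EuclideanSpace.single_apply,
        mul_ite, mul_one, mul_zero, Finset.sum_ite_eq]
      by_cases hj : j ∈ S
      · simp [hj]
      · simp [hj, hS j hj]
    have h0mem : (0 : EuclideanSpace ℝ (Fin n)) ∈ convexHull ℝ
        ({0} ∪ {x : EuclideanSpace ℝ (Fin n) | ∃ i ∈ S, x = EuclideanSpace.single i (1 : ℝ)}) :=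
      subset_convexHull ℝ _ (Or.inl rfl)
    rcases eq_or_lt_of_le hc0 with hceq | hcpos
    · have : x = 0 := by
        rw [hxsum]
        refine Finset.sum_eq_zero fun i hi => ?_
        have : x i = 0 := by
          have := Finset.sum_eq_zero_iff_of_nonneg (fun i _ => h0 i) |>.mp hceq.symm i hi
          exact this
        rw [this, zero_smul]
      rw [this]; exact h0mem
    · have hm : S.centerMass x (fun i => EuclideanSpace.single i (1 : ℝ)) ∈ convexHull ℝ
          ({0} ∪ {x : EuclideanSpace ℝ (Fin n) | ∃ i ∈ S, x = EuclideanSpace.single i (1 : ℝ)}) := by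
        apply Finset.centerMass_mem_convexHull
        · exact fun i _ => h0 i
        · exact hcpos
        · exact fun i hi => Or.inr ⟨i, hi, rfl⟩
      have hx2 : x = c • S.centerMass x (fun i => EuclideanSpace.single i (1 : ℝ))
          + (1 - c) • (0 : EuclideanSpace ℝ (Fin n)) := by
        rw [Finset.centerMass, smul_smul, smul_zero, add_zero, ← hc,
          mul_inv_cancel₀ (ne_of_gt hcpos), one_smul]
        exact hxsum
      rw [hx2]
      exact (convex_convexHull ℝ _) hm h0mem hc0 (by linarith) (by ring)

/-- For the standard simplex `Δ` in `ℝ^n` and the faces `F_S = conv({0} ∪ {e_i : i ∈ S})`,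
`μΔ + ν(−Δ) = ⋃_{S ⊆ {1,…,n}} (μ F_S + ν(−F_{Sᶜ}))` for all positive reals `μ, ν`. -/
theorem smul_add_smul_neg_stdSimplex_eq_union_faces (n : ℕ) (hn : 1 ≤ n)
    (Δ : Set (EuclideanSpace ℝ (Fin n)))
    (hΔ : Δ = {x | (∀ i, 0 ≤ x i) ∧ ∑ i, x i ≤ 1})
    (F : Finset (Fin n) → Set (EuclideanSpace ℝ (Fin n)))
    (hF : ∀ S, F S =
      convexHull ℝ ({0} ∪ {x | ∃ i ∈ S, x = EuclideanSpace.single i (1 : ℝ)}))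
    (μ ν : ℝ) (hμ : 0 < μ) (hν : 0 < ν) :
    μ • Δ + ν • (-Δ) = ⋃ S : Finset (Fin n), (μ • F S + ν • (-(F Sᶜ))) := by
  have hFeq : ∀ S : Finset (Fin n), F S =
      {x : EuclideanSpace ℝ (Fin n) |
        (∀ i, 0 ≤ x i) ∧ (∀ i, i ∉ S → x i = 0) ∧ ∑ i, x i ≤ 1} := fun S => by
    rw [hF S, face_hull_eq]
  have hFΔ : ∀ S : Finset (Fin n), F S ⊆ Δ := fun S => by
    rw [hFeq S, hΔ]
    rintro x ⟨h1, _, h3⟩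
    exact ⟨h1, h3⟩
  apply le_antisymm
  · rintro x ⟨a, ⟨a', ha', rfl⟩, b, ⟨b', hb', rfl⟩, rfl⟩
    rw [hΔ] at ha'
    rw [Set.mem_neg, hΔ] at hb'
    classical
    set y : EuclideanSpace ℝ (Fin n) := μ • a' + ν • b' with hy
    have happ : ∀ i, y i = μ * a' i + ν * b' i := fun _ => rfl
    have hbneg : ∀ i, (-b') i = -(b' i) := fun _ => rfl
    have hb1 : ∀ i, b' i ≤ 0 := fun i => by
      have := hb'.1 i; rw [hbneg] at this; linarith
    have hb2 : ∑ i, -(b' i) ≤ 1 := by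
      have := hb'.2; simpa [hbneg] using this
    set S : Finset (Fin n) := Finset.univ.filter (fun i => 0 < y i) with hSdef
    have hmemS : ∀ i, i ∈ S ↔ 0 < y i := fun i => by
      simp [hSdef]
    set u : EuclideanSpace ℝ (Fin n) := WithLp.toLp 2 (fun i => if 0 < y i then y i / μ else 0) with hu
    set v : EuclideanSpace ℝ (Fin n) := WithLp.toLp 2 (fun i => if 0 < y i then 0 else -y i / ν) with hv
    have hua : ∀ i, u i ≤ a' i := fun i => by
      rw [hu]; dsimp only
      split_ifs with h
      · rw [div_le_iff₀ hμ]
        have h1 := hb1 i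
        have := happ i
        nlinarith [ha'.1 i]
      · exact ha'.1 i
    have hvb : ∀ i, v i ≤ -(b' i) := fun i => by
      rw [hv]; dsimp only
      split_ifs with h
      · linarith [hb1 i]
      · rw [div_le_iff₀ hν]
        have := happ i
        push_neg at h
        nlinarith [ha'.1 i]
    have huF : u ∈ F S := by
      rw [hFeq S]
      refine ⟨fun i => ?_, fun i hi => ?_, ?_⟩
      · rw [hu]; dsimp only; split_ifs with h
        · positivity
        · exact le_refl 0
      · rw [hu]; dsimp only
        rw [hmemS] at hi
        rw [if_neg hi]
      · calc ∑ i, u i ≤ ∑ i, a' i := Finset.sum_le_sum fun i _ => hua i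
          _ ≤ 1 := ha'.2
    have hvF : v ∈ F Sᶜ := by
      rw [hFeq Sᶜ]
      refine ⟨fun i => ?_, fun i hi => ?_, ?_⟩
      · rw [hv]; dsimp only; split_ifs with h
        · exact le_refl 0
        · push_neg at h
          apply div_nonneg _ (le_of_lt hν); linarith
      · rw [hv]; dsimp only
        rw [Finset.mem_compl, not_not, hmemS] at hi
        rw [if_pos hi]
      · calc ∑ i, v i ≤ ∑ i, -(b' i) := Finset.sum_le_sum fun i _ => hvb i
          _ ≤ 1 := hb2
    have hyeq : y = μ • u + ν • (-v) := by
      ext i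
      have h1 : (μ • u + ν • (-v)) i = μ * u i + ν * (-(v i)) := rfl
      rw [h1, hu, hv]; dsimp only
      split_ifs with h
      · field_simp; ring
      · field_simp; ring
    rw [Set.mem_iUnion]
    refine ⟨S, Set.mem_add.mpr ⟨μ • u, Set.smul_mem_smul_set huF,
      ν • (-v), Set.smul_mem_smul_set (Set.neg_mem_neg.mpr hvF), hyeq.symm⟩⟩
  · refine Set.iUnion_subset fun S => ?_
    apply Set.add_subset_add
    · exact Set.smul_set_mono (hFΔ S)
    · exact Set.smul_set_mono (Set.neg_subset_neg.mpr (hFΔ Sᶜ))
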